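/- Let A be an m×m matrix over F₂, G_A the gauge group of its generalized Bacon–Shor code and S_A = G_A ∩ C(G_A) its stabilizer group. Then for x ∈ F₂^m the X-type operator P^X(x) = ∑_j x_j C_j belongs to S_A if and only if Ax = 0, and for z ∈ F₂^m the Z-type operator P^Z(z) = ∑_i z_i R_i belongs to S_A if and only if Aᵀz = 0. -/

import Mathlib

set_option linter.unusedSectionVars false

open Finset Matrix

abbrev F2 : Type := ZMod 2

abbrev PauliSpace (Q : Type) := Q → F2 × F2

section Pauli

variable {Q : Type} [Fintype Q] [DecidableEq Q]

/-- Support of a Pauli vector. -/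
def psupp (v : PauliSpace Q) : Finset Q := Finset.univ.filter (fun q => v q ≠ (0, 0))

/-- Weight of a Pauli vector. -/
def pwt (v : PauliSpace Q) : ℕ := (psupp v).card

/-- The symplectic form. -/
def omegaF (u v : PauliSpace Q) : F2 :=
  ∑ q, ((u q).1 * (v q).2 + (u q).2 * (v q).1)

lemma omegaF_add_left (u v w : PauliSpace Q) :
    omegaF (u + v) w = omegaF u w + omegaF v w := by
  simp only [omegaF, Pi.add_apply, Prod.fst_add, Prod.snd_add, ← Finset.sum_add_distrib]
  exact Finset.sum_congr rfl (fun q _ => by ring)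

lemma omegaF_smul_left (c : F2) (u w : PauliSpace Q) :
    omegaF (c • u) w = c * omegaF u w := by
  simp only [omegaF, Pi.smul_apply, Prod.smul_fst, Prod.smul_snd, smul_eq_mul,
    Finset.mul_sum]
  exact Finset.sum_congr rfl (fun q _ => by ring)

/-- Centralizer of a subspace w.r.t. the symplectic form. -/
def pcent (G : Submodule F2 (PauliSpace Q)) : Submodule F2 (PauliSpace Q) where
  carrier := {v | ∀ g ∈ G, omegaF v g = 0}
  zero_mem' := by
    intro g _
    simp [omegaF]
  add_mem' := by
    intro a b ha hb g hg
    rw [omegaF_add_left, ha g hg, hb g hg, add_zero]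
  smul_mem' := by
    intro c a ha g hg
    rw [omegaF_smul_left, ha g hg, mul_zero]

/-- Stabilizer group of a gauge group. -/
def pstab (G : Submodule F2 (PauliSpace Q)) : Submodule F2 (PauliSpace Q) := G ⊓ pcent G

/-- Single-qubit Pauli X vector. -/
def Xop (c : Q) : PauliSpace Q := fun q => if q = c then (1, 0) else (0, 0)

/-- Single-qubit Pauli Z vector. -/
def Zop (c : Q) : PauliSpace Q := fun q => if q = c then (0, 1) else (0, 0)

/-- The set of weights of dressed logical operators; its infimum is the distance. -/
def distSet (G : Submodule F2 (PauliSpace Q)) : Set ℕ :=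
  {w | ∃ v, v ∈ pcent (pstab G) ∧ v ∉ G ∧ pwt v = w}

/-- Pauli vectors supported in `M`. -/
def PMod (M : Finset Q) : Submodule F2 (PauliSpace Q) where
  carrier := {v | ∀ q, q ∉ M → v q = 0}
  zero_mem' := by intro q _; rfl
  add_mem' := by
    intro a b ha hb q hq
    simp [Pi.add_apply, ha q hq, hb q hq]
  smul_mem' := by
    intro c a ha q hq
    simp [Pi.smul_apply, ha q hq]

/-- Projection onto the qubits in `M`. -/
def projL (M : Finset Q) : PauliSpace Q →ₗ[F2] PauliSpace Q where
  toFun v := fun q => if q ∈ M then v q else 0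
  map_add' a b := by funext q; by_cases h : q ∈ M <;> simp [h]
  map_smul' c a := by funext q; by_cases h : q ∈ M <;> simp [h]

/-- Number of independent dressed logical operators supported in `M`. -/
noncomputable def lM (G : Submodule F2 (PauliSpace Q)) (M : Finset Q) : ℕ :=
  Module.finrank F2 ↥(pcent ((pstab G).map (projL M)) ⊓ PMod M)
    - Module.finrank F2 ↥(G ⊓ PMod M)

/-- Number of independent bare logical operators supported in `M`. -/
noncomputable def lbareM (G : Submodule F2 (PauliSpace Q)) (M : Finset Q) : ℕ :=
  Module.finrank F2 ↥(pcent (G.map (projL M)) ⊓ PMod M)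
    - Module.finrank F2 ↥(pstab G ⊓ PMod M)

end Pauli

section Classical

variable {ι : Type} [Fintype ι] [DecidableEq ι]

/-- Hamming weight of a classical vector. -/
def hwt (v : ι → F2) : ℕ := (Finset.univ.filter (fun i => v i ≠ 0)).card

/-- Row space of a matrix. -/
def Crow (A : Matrix ι ι F2) : Submodule F2 (ι → F2) := Submodule.span F2 (Set.range A)

/-- Column space of a matrix. -/
def Ccol (A : Matrix ι ι F2) : Submodule F2 (ι → F2) := Submodule.span F2 (Set.range Aᵀ)

/-- Minimum distance of the row space. -/
noncomputable def drow (A : Matrix ι ι F2) : ℕ := sInf {w | ∃ v ∈ Crow A, v ≠ 0 ∧ hwt v = w}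

/-- Minimum distance of the column space. -/
noncomputable def dcol (A : Matrix ι ι F2) : ℕ := sInf {w | ∃ v ∈ Ccol A, v ≠ 0 ∧ hwt v = w}

/-- Number of nonzero entries of a matrix. -/
def nnz (A : Matrix ι ι F2) : ℕ :=
  (Finset.univ.filter (fun p : ι × ι => A p.1 p.2 ≠ 0)).card

end Classical

section BaconShor

variable {m : ℕ}

/-- Qubit set of the generalized Bacon-Shor code: cells with `A i j = 1`. -/
abbrev QA (A : Matrix (Fin m) (Fin m) F2) : Type := {c : Fin m × Fin m // A c.1 c.2 = 1}

/-- Generators of the gauge group. -/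
def gaugeSet (A : Matrix (Fin m) (Fin m) F2) : Set (PauliSpace (QA A)) :=
  {v | ∃ c c' : QA A, c ≠ c' ∧
    ((c.1.1 = c'.1.1 ∧ v = Xop c + Xop c') ∨ (c.1.2 = c'.1.2 ∧ v = Zop c + Zop c'))}

/-- Gauge group of the generalized Bacon-Shor code. -/
def gaugeBS (A : Matrix (Fin m) (Fin m) F2) : Submodule F2 (PauliSpace (QA A)) :=
  Submodule.span F2 (gaugeSet A)

/-- The row operator `R i`. -/
def Rop (A : Matrix (Fin m) (Fin m) F2) (i : Fin m) : PauliSpace (QA A) :=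
  ∑ c ∈ Finset.univ.filter (fun c : QA A => c.1.1 = i), Zop c

/-- The column operator `C j`. -/
def Cop (A : Matrix (Fin m) (Fin m) F2) (j : Fin m) : PauliSpace (QA A) :=
  ∑ c ∈ Finset.univ.filter (fun c : QA A => c.1.2 = j), Xop c

/-- X-type operator parameterized by a binary vector. -/
def PXop (A : Matrix (Fin m) (Fin m) F2) (x : Fin m → F2) : PauliSpace (QA A) :=
  ∑ j, x j • Cop A j

/-- Z-type operator parameterized by a binary vector. -/
def PZop (A : Matrix (Fin m) (Fin m) F2) (z : Fin m → F2) : PauliSpace (QA A) :=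
  ∑ i, z i • Rop A i

end BaconShor

/-- Binary entropy. -/
noncomputable def H2 (p : ℝ) : ℝ := -p * Real.logb 2 p - (1 - p) * Real.logb 2 (1 - p)

section Aux

lemma F2_add_self (a : F2) : a + a = 0 := by
  fin_cases a <;> decide

lemma F2_eq_zero_or_one (a : F2) : a = 0 ∨ a = 1 := by
  fin_cases a
  · exact Or.inl rfl
  · exact Or.inr rfl

variable {Q : Type} [Fintype Q] [DecidableEq Q]

lemma pauli_add_self (v : PauliSpace Q) : v + v = 0 := by
  funext q
  show v q + v q = 0
  ext <;> simp [F2_add_self]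

lemma Xop_apply (c q : Q) : Xop c q = if q = c then ((1:F2), (0:F2)) else (0,0) := rfl
lemma Zop_apply (c q : Q) : Zop c q = if q = c then ((0:F2), (1:F2)) else (0,0) := rfl

lemma omegaF_zero_right (u : PauliSpace Q) : omegaF u 0 = 0 := by
  simp [omegaF]

lemma omegaF_add_right (u v w : PauliSpace Q) :
    omegaF u (v + w) = omegaF u v + omegaF u w := by
  simp only [omegaF, Pi.add_apply, Prod.fst_add, Prod.snd_add, ← Finset.sum_add_distrib]
  exact Finset.sum_congr rfl (fun q _ => by ring)

lemma omegaF_smul_right (c : F2) (u w : PauliSpace Q) :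
    omegaF u (c • w) = c * omegaF u w := by
  simp only [omegaF, Pi.smul_apply, Prod.smul_fst, Prod.smul_snd, smul_eq_mul, Finset.mul_sum]
  exact Finset.sum_congr rfl (fun q _ => by ring)

lemma omegaF_Xop_right (u : PauliSpace Q) (c : Q) : omegaF u (Xop c) = (u c).2 := by
  simp only [omegaF, Xop_apply]
  rw [Finset.sum_congr rfl (fun q _ => show _ = if q = c then (u q).2 else 0 by
    by_cases h : q = c <;> simp [h])]
  simp

lemma omegaF_Zop_right (u : PauliSpace Q) (c : Q) : omegaF u (Zop c) = (u c).1 := by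
  simp only [omegaF, Zop_apply]
  rw [Finset.sum_congr rfl (fun q _ => show _ = if q = c then (u q).1 else 0 by
    by_cases h : q = c <;> simp [h])]
  simp

end Aux
section BS
variable {m : ℕ}

lemma Cop_apply (A : Matrix (Fin m) (Fin m) F2) (j : Fin m) (c : QA A) :
    Cop A j c = if c.1.2 = j then ((1:F2),(0:F2)) else (0,0) := by
  simp only [Cop, Finset.sum_apply, Xop_apply]
  rw [show (fun x : QA A => if c = x then ((1:F2),(0:F2)) else (0,0))
      = (fun x : QA A => if c = x then ((1:F2),(0:F2)) else 0) from rfl,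
    Finset.sum_ite_eq (Finset.univ.filter (fun c : QA A => c.1.2 = j)) c
    (fun _ => ((1:F2),(0:F2)))]
  simp
  rfl

lemma Rop_apply (A : Matrix (Fin m) (Fin m) F2) (i : Fin m) (c : QA A) :
    Rop A i c = if c.1.1 = i then ((0:F2),(1:F2)) else (0,0) := by
  simp only [Rop, Finset.sum_apply, Zop_apply]
  rw [show (fun x : QA A => if c = x then ((0:F2),(1:F2)) else (0,0))
      = (fun x : QA A => if c = x then ((0:F2),(1:F2)) else 0) from rfl,
    Finset.sum_ite_eq (Finset.univ.filter (fun c : QA A => c.1.1 = i)) c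
    (fun _ => ((0:F2),(1:F2)))]
  simp
  rfl

lemma PXop_apply (A : Matrix (Fin m) (Fin m) F2) (x : Fin m → F2) (c : QA A) :
    PXop A x c = (x c.1.2, 0) := by
  simp only [PXop, Finset.sum_apply, Pi.smul_apply, Cop_apply]
  rw [Finset.sum_congr rfl (fun j _ => show _ = if c.1.2 = j then (x j, (0:F2)) else 0 by
    by_cases h : c.1.2 = j <;> simp [h, Prod.smul_mk])]
  simp [Finset.sum_ite_eq]

lemma PZop_apply (A : Matrix (Fin m) (Fin m) F2) (z : Fin m → F2) (c : QA A) :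
    PZop A z c = (0, z c.1.1) := by
  simp only [PZop, Finset.sum_apply, Pi.smul_apply, Rop_apply]
  rw [Finset.sum_congr rfl (fun i _ => show _ = if c.1.1 = i then ((0:F2), z i) else 0 by
    by_cases h : c.1.1 = i <;> simp [h, Prod.smul_mk])]
  simp [Finset.sum_ite_eq]

/-- key sum: sum over the qubits in row i of x at the column equals (Ax)_i -/
lemma sum_row (A : Matrix (Fin m) (Fin m) F2) (i : Fin m) (x : Fin m → F2) :
    ∑ c ∈ Finset.univ.filter (fun c : QA A => c.1.1 = i), x c.1.2 = A.mulVec x i := by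
  classical
  rw [Finset.sum_filter]
  rw [← Finset.sum_subtype (Finset.univ.filter (fun p : Fin m × Fin m => A p.1 p.2 = 1))
    (fun p => by simp) (fun p : Fin m × Fin m => if p.1 = i then x p.2 else 0)]
  rw [Finset.sum_filter, Fintype.sum_prod_type]
  rw [Matrix.mulVec, dotProduct]
  rw [Finset.sum_eq_single i]
  · apply Finset.sum_congr rfl
    intro j _
    rcases F2_eq_zero_or_one (A i j) with h | h <;> simp [h]
  · intro b _ hb
    apply Finset.sum_eq_zero
    intro j _
    simp [hb]
  · simp

lemma sum_col (A : Matrix (Fin m) (Fin m) F2) (j : Fin m) (z : Fin m → F2) :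
    ∑ c ∈ Finset.univ.filter (fun c : QA A => c.1.2 = j), z c.1.1 = Aᵀ.mulVec z j := by
  classical
  rw [Finset.sum_filter]
  rw [← Finset.sum_subtype (Finset.univ.filter (fun p : Fin m × Fin m => A p.1 p.2 = 1))
    (fun p => by simp) (fun p : Fin m × Fin m => if p.2 = j then z p.1 else 0)]
  rw [Finset.sum_filter, Fintype.sum_prod_type_right]
  rw [Matrix.mulVec, dotProduct]
  rw [Finset.sum_eq_single j]
  · apply Finset.sum_congr rfl
    intro i _
    rcases F2_eq_zero_or_one (A i j) with h | h <;> simp [h, Matrix.transpose_apply]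
  · intro b _ hb
    apply Finset.sum_eq_zero
    intro i _
    simp [hb]
  · simp

end BS
section BS2
variable {m : ℕ}

lemma PXop_mem_pcent (A : Matrix (Fin m) (Fin m) F2) (x : Fin m → F2) :
    PXop A x ∈ pcent (gaugeBS A) := by
  intro g hg
  induction hg using Submodule.span_induction with
  | mem g hg =>
    obtain ⟨c, c', hne, h⟩ := hg
    rcases h with ⟨hrow, rfl⟩ | ⟨hcol, rfl⟩
    · rw [omegaF_add_right, omegaF_Xop_right, omegaF_Xop_right, PXop_apply, PXop_apply]
      simp
    · rw [omegaF_add_right, omegaF_Zop_right, omegaF_Zop_right, PXop_apply, PXop_apply]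
      rw [hcol]
      exact F2_add_self _
  | zero => exact omegaF_zero_right _
  | add g h _ _ hg hh => rw [omegaF_add_right, hg, hh, add_zero]
  | smul a g _ hg => rw [omegaF_smul_right, hg, mul_zero]

lemma PZop_mem_pcent (A : Matrix (Fin m) (Fin m) F2) (z : Fin m → F2) :
    PZop A z ∈ pcent (gaugeBS A) := by
  intro g hg
  induction hg using Submodule.span_induction with
  | mem g hg =>
    obtain ⟨c, c', hne, h⟩ := hg
    rcases h with ⟨hrow, rfl⟩ | ⟨hcol, rfl⟩
    · rw [omegaF_add_right, omegaF_Xop_right, omegaF_Xop_right, PZop_apply, PZop_apply]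
      rw [hrow]
      exact F2_add_self _
    · rw [omegaF_add_right, omegaF_Zop_right, omegaF_Zop_right, PZop_apply, PZop_apply]
      simp
  | zero => exact omegaF_zero_right _
  | add g h _ _ hg hh => rw [omegaF_add_right, hg, hh, add_zero]
  | smul a g _ hg => rw [omegaF_smul_right, hg, mul_zero]

/-- Sum of X-components over row i, as a linear map. -/
def rowXL (A : Matrix (Fin m) (Fin m) F2) (i : Fin m) : PauliSpace (QA A) →ₗ[F2] F2 where
  toFun v := ∑ c ∈ Finset.univ.filter (fun c : QA A => c.1.1 = i), (v c).1
  map_add' a b := by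
    simp only [Pi.add_apply, Prod.fst_add, Finset.sum_add_distrib]
  map_smul' r a := by
    simp only [Pi.smul_apply, Prod.smul_fst, smul_eq_mul, Finset.mul_sum, RingHom.id_apply]

/-- Sum of Z-components over column j, as a linear map. -/
def colZL (A : Matrix (Fin m) (Fin m) F2) (j : Fin m) : PauliSpace (QA A) →ₗ[F2] F2 where
  toFun v := ∑ c ∈ Finset.univ.filter (fun c : QA A => c.1.2 = j), (v c).2
  map_add' a b := by
    simp only [Pi.add_apply, Prod.snd_add, Finset.sum_add_distrib]
  map_smul' r a := by
    simp only [Pi.smul_apply, Prod.smul_snd, smul_eq_mul, Finset.mul_sum, RingHom.id_apply]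


lemma rowXL_Xop (A : Matrix (Fin m) (Fin m) F2) (i : Fin m) (c : QA A) :
    rowXL A i (Xop c) = if c.1.1 = i then 1 else 0 := by
  simp only [rowXL, LinearMap.coe_mk, AddHom.coe_mk, Xop_apply]
  rw [Finset.sum_congr rfl (fun q _ => show ((if q = c then ((1:F2),(0:F2)) else (0,0)).1)
      = if q = c then (1:F2) else 0 by by_cases h : q = c <;> simp [h])]
  rw [Finset.sum_ite_eq' (Finset.univ.filter (fun c : QA A => c.1.1 = i)) c (fun _ => (1:F2))]
  simp

lemma rowXL_Zop (A : Matrix (Fin m) (Fin m) F2) (i : Fin m) (c : QA A) :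
    rowXL A i (Zop c) = 0 := by
  simp only [rowXL, LinearMap.coe_mk, AddHom.coe_mk, Zop_apply]
  apply Finset.sum_eq_zero
  intro q _
  by_cases h : q = c <;> simp [h]

lemma colZL_Zop (A : Matrix (Fin m) (Fin m) F2) (j : Fin m) (c : QA A) :
    colZL A j (Zop c) = if c.1.2 = j then 1 else 0 := by
  simp only [colZL, LinearMap.coe_mk, AddHom.coe_mk, Zop_apply]
  rw [Finset.sum_congr rfl (fun q _ => show ((if q = c then ((0:F2),(1:F2)) else (0,0)).2)
      = if q = c then (1:F2) else 0 by by_cases h : q = c <;> simp [h])]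
  rw [Finset.sum_ite_eq' (Finset.univ.filter (fun c : QA A => c.1.2 = j)) c (fun _ => (1:F2))]
  simp

lemma colZL_Xop (A : Matrix (Fin m) (Fin m) F2) (j : Fin m) (c : QA A) :
    colZL A j (Xop c) = 0 := by
  simp only [colZL, LinearMap.coe_mk, AddHom.coe_mk, Xop_apply]
  apply Finset.sum_eq_zero
  intro q _
  by_cases h : q = c <;> simp [h]

lemma rowXL_gauge (A : Matrix (Fin m) (Fin m) F2) (i : Fin m) :
    gaugeBS A ≤ LinearMap.ker (rowXL A i) := by
  rw [gaugeBS, Submodule.span_le]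
  rintro g ⟨c, c', hne, ⟨hrow, rfl⟩ | ⟨hcol, rfl⟩⟩ <;>
    simp only [SetLike.mem_coe, LinearMap.mem_ker, map_add, rowXL_Xop, rowXL_Zop]
  · rw [hrow]
    by_cases h : c'.1.1 = i <;> simp [h] <;> decide
  · simp

lemma colZL_gauge (A : Matrix (Fin m) (Fin m) F2) (j : Fin m) :
    gaugeBS A ≤ LinearMap.ker (colZL A j) := by
  rw [gaugeBS, Submodule.span_le]
  rintro g ⟨c, c', hne, ⟨hrow, rfl⟩ | ⟨hcol, rfl⟩⟩ <;>
    simp only [SetLike.mem_coe, LinearMap.mem_ker, map_add, colZL_Zop, colZL_Xop]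
  · simp
  · rw [hcol]
    by_cases h : c'.1.2 = j <;> simp [h] <;> decide

lemma rowXL_PXop (A : Matrix (Fin m) (Fin m) F2) (i : Fin m) (x : Fin m → F2) :
    rowXL A i (PXop A x) = A.mulVec x i := by
  simp only [rowXL, LinearMap.coe_mk, AddHom.coe_mk, PXop_apply]
  exact sum_row A i x

lemma colZL_PZop (A : Matrix (Fin m) (Fin m) F2) (j : Fin m) (z : Fin m → F2) :
    colZL A j (PZop A z) = Aᵀ.mulVec z j := by
  simp only [colZL, LinearMap.coe_mk, AddHom.coe_mk, PZop_apply]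
  exact sum_col A j z

end BS2
section BS3
variable {m : ℕ}

lemma PXop_eq_sum (A : Matrix (Fin m) (Fin m) F2) (x : Fin m → F2) :
    PXop A x = ∑ c : QA A, x c.1.2 • Xop c := by
  funext q
  rw [PXop_apply, Finset.sum_apply]
  simp only [Pi.smul_apply]
  rw [Finset.sum_congr rfl (fun c _ => show x c.1.2 • Xop c q
      = (if q = c then (x c.1.2, (0:F2)) else 0) by
    rw [Xop_apply]; by_cases h : q = c <;> simp [h, Prod.smul_mk])]
  rw [Finset.sum_ite_eq Finset.univ q (fun c => (x c.1.2, (0:F2)))]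
  simp

lemma PZop_eq_sum (A : Matrix (Fin m) (Fin m) F2) (z : Fin m → F2) :
    PZop A z = ∑ c : QA A, z c.1.1 • Zop c := by
  funext q
  rw [PZop_apply, Finset.sum_apply]
  simp only [Pi.smul_apply]
  rw [Finset.sum_congr rfl (fun c _ => show z c.1.1 • Zop c q
      = (if q = c then ((0:F2), z c.1.1) else 0) by
    rw [Zop_apply]; by_cases h : q = c <;> simp [h, Prod.smul_mk])]
  rw [Finset.sum_ite_eq Finset.univ q (fun c => ((0:F2), z c.1.1))]
  simp

lemma PXop_mem_gauge (A : Matrix (Fin m) (Fin m) F2) (x : Fin m → F2)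
    (hx : A.mulVec x = 0) : PXop A x ∈ gaugeBS A := by
  classical
  rw [PXop_eq_sum,
    ← Finset.sum_fiberwise Finset.univ (fun c : QA A => c.1.1) (fun c => x c.1.2 • Xop c)]
  apply Submodule.sum_mem
  intro i _
  set S := Finset.univ.filter (fun c : QA A => c.1.1 = i) with hSdef
  by_cases hS : S.Nonempty
  · obtain ⟨c0, hc0⟩ := hS
    have hc0i : c0.1.1 = i := (Finset.mem_filter.mp hc0).2
    have hs : ∑ c ∈ S, x c.1.2 = 0 := by
      rw [hSdef, sum_row A i x]
      exact congrFun hx i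
    have key : ∑ c ∈ S, x c.1.2 • Xop c = ∑ c ∈ S, x c.1.2 • (Xop c + Xop c0) := by
      simp only [smul_add, Finset.sum_add_distrib, ← Finset.sum_smul, hs, zero_smul, add_zero]
    rw [key]
    apply Submodule.sum_mem
    intro c hc
    apply Submodule.smul_mem
    by_cases h : c = c0
    · subst h
      rw [pauli_add_self]
      exact Submodule.zero_mem _
    · apply Submodule.subset_span
      exact ⟨c, c0, h, Or.inl ⟨by rw [(Finset.mem_filter.mp hc).2, hc0i], rfl⟩⟩
  · rw [Finset.not_nonempty_iff_eq_empty] at hS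
    rw [hS, Finset.sum_empty]
    exact Submodule.zero_mem _

lemma PZop_mem_gauge (A : Matrix (Fin m) (Fin m) F2) (z : Fin m → F2)
    (hz : Aᵀ.mulVec z = 0) : PZop A z ∈ gaugeBS A := by
  classical
  rw [PZop_eq_sum,
    ← Finset.sum_fiberwise Finset.univ (fun c : QA A => c.1.2) (fun c => z c.1.1 • Zop c)]
  apply Submodule.sum_mem
  intro j _
  set S := Finset.univ.filter (fun c : QA A => c.1.2 = j) with hSdef
  by_cases hS : S.Nonempty
  · obtain ⟨c0, hc0⟩ := hS
    have hc0j : c0.1.2 = j := (Finset.mem_filter.mp hc0).2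
    have hs : ∑ c ∈ S, z c.1.1 = 0 := by
      rw [hSdef, sum_col A j z]
      exact congrFun hz j
    have key : ∑ c ∈ S, z c.1.1 • Zop c = ∑ c ∈ S, z c.1.1 • (Zop c + Zop c0) := by
      simp only [smul_add, Finset.sum_add_distrib, ← Finset.sum_smul, hs, zero_smul, add_zero]
    rw [key]
    apply Submodule.sum_mem
    intro c hc
    apply Submodule.smul_mem
    by_cases h : c = c0
    · subst h
      rw [pauli_add_self]
      exact Submodule.zero_mem _
    · apply Submodule.subset_span
      exact ⟨c, c0, h, Or.inr ⟨by rw [(Finset.mem_filter.mp hc).2, hc0j], rfl⟩⟩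
  · rw [Finset.not_nonempty_iff_eq_empty] at hS
    rw [hS, Finset.sum_empty]
    exact Submodule.zero_mem _

end BS3

/-- `P^X(x)` is a stabilizer iff `Ax = 0`, and `P^Z(z)` is a stabilizer iff `Aᵀz = 0`. -/
theorem stabilizer_iff_kernel {m : ℕ} (A : Matrix (Fin m) (Fin m) F2) :
    (∀ x : Fin m → F2, (PXop A x ∈ pstab (gaugeBS A) ↔ A.mulVec x = 0)) ∧
    (∀ z : Fin m → F2, (PZop A z ∈ pstab (gaugeBS A) ↔ Aᵀ.mulVec z = 0)) := by
  constructor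
  · intro x
    constructor
    · intro h
      have hG : PXop A x ∈ gaugeBS A := (Submodule.mem_inf.mp h).1
      funext i
      rw [Pi.zero_apply, ← rowXL_PXop A i x]
      exact rowXL_gauge A i hG
    · intro hx
      exact Submodule.mem_inf.mpr ⟨PXop_mem_gauge A x hx, PXop_mem_pcent A x⟩
  · intro z
    constructor
    · intro h
      have hG : PZop A z ∈ gaugeBS A := (Submodule.mem_inf.mp h).1
      funext j
      rw [Pi.zero_apply, ← colZL_PZop A j z]
      exact colZL_gauge A j hG
    · intro hz
      exact Submodule.mem_inf.mpr ⟨PZop_mem_gauge A z hz, PZop_mem_pcent A z⟩
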